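/- Let g(q) = ∑_{n≥0} q^n a_n be a slice regular function on 𝔹 such that Im_{I_q}(g(q)) = 0 for every nonreal q ∈ 𝔹. Then g is a real constant function: a₀ ∈ ℝ and a_n = 0 for every n ≥ 1. -/

import Mathlib

noncomputable section

open Filter Metric Set

local notation "ℍ" => Quaternion ℝ

/-! ### Auxiliary lemmas -/

/-- Real part as a continuous linear map. -/
def reCLM : ℍ →L[ℝ] ℝ where
  toFun := QuaternionAlgebra.re
  map_add' a b := by simp
  map_smul' s a := by simp
  cont := Quaternion.continuous_re

@[simp] lemma reCLM_apply (x : ℍ) : reCLM x = x.re := rfl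

lemma abs_re_le_norm (w : ℍ) : |w.re| ≤ ‖w‖ := by
  have h1 : w.re ^ 2 ≤ Quaternion.normSq w := by
    rw [Quaternion.normSq_def']; nlinarith [sq_nonneg w.imI, sq_nonneg w.imJ, sq_nonneg w.imK]
  have h2 : Quaternion.normSq w = ‖w‖ * ‖w‖ := Quaternion.normSq_eq_norm_mul_self w
  nlinarith [abs_nonneg w.re, norm_nonneg w, sq_abs w.re]

lemma re_mul_comm (p q : ℍ) : (p * q).re = (q * p).re := by
  simp [Quaternion.re_mul]; ring

lemma mulIform (I : ℍ) (hI2 : I * I = -1) (A B C D : ℝ) :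
    (A • (1:ℍ) + B • I) * (C • (1:ℍ) + D • I)
      = (A*C - B*D) • (1:ℍ) + (A*D + B*C) • I := by
  have hI2' : I * I = -(1:ℍ) := by rw [hI2]
  rw [add_mul, mul_add, mul_add]
  simp only [smul_mul_assoc, mul_smul_comm, one_mul, mul_one, hI2']
  module

lemma powform (I : ℍ) (hI2 : I * I = -1) (t θ : ℝ) (n : ℕ) :
    ((t * Real.cos θ) • (1:ℍ) + (t * Real.sin θ) • I) ^ n
      = (t ^ n * Real.cos (n * θ)) • (1:ℍ) + (t ^ n * Real.sin (n * θ)) • I := by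
  induction n with
  | zero => simp
  | succ n ih =>
    rw [pow_succ, ih, mulIform I hI2]
    have h1 : ((n : ℝ) + 1) * θ = n * θ + θ := by ring
    push_cast
    rw [h1, Real.cos_add, Real.sin_add]
    match_scalars <;> ring

lemma normform (I : ℍ) (hI2 : I * I = -1) (hIre : I.re = 0) (A B : ℝ) :
    ‖A • (1:ℍ) + B • I‖ = Real.sqrt (A ^ 2 + B ^ 2) := by
  have hstar : star I = -I := Quaternion.star_eq_neg.2 hIre
  set q : ℍ := A • (1:ℍ) + B • I with hq
  have hmul : q * star q = (A ^ 2 + B ^ 2) • (1:ℍ) := by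
    rw [hq, star_add, Quaternion.star_smul, Quaternion.star_smul, star_one, hstar,
      show B • (-I) = (-B) • I by module, mulIform I hI2]
    match_scalars <;> ring
  have hns : Quaternion.normSq q = A ^ 2 + B ^ 2 := by
    have h := Quaternion.self_mul_star q
    rw [hmul] at h
    have h2 := congrArg QuaternionAlgebra.re h
    simpa [Quaternion.re_smul, smul_eq_mul, Quaternion.re_one, Quaternion.imI_one, Quaternion.imJ_one, Quaternion.imK_one] using h2.symm
  have h3 : ‖q‖ * ‖q‖ = A ^ 2 + B ^ 2 := by
    rw [← Quaternion.normSq_eq_norm_mul_self, hns]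
  rw [← h3, Real.sqrt_mul_self (norm_nonneg q)]

lemma re_smulone_add_smul_mul (I : ℍ) (A B : ℝ) (w : ℍ) :
    ((A • (1:ℍ) + B • I) * w).re = A * w.re + B * (I * w).re := by
  rw [add_mul, smul_mul_assoc, smul_mul_assoc, one_mul]
  simp [Quaternion.re_smul, smul_eq_mul]

/-! ### Extraction of power series coefficients -/

lemma tsum_split (b : ℕ → ℝ) (t : ℝ) (ht : 0 < t)
    (hs : Summable fun n => |b n| * t ^ n) :
    ∑' n, b n * t ^ n = b 0 + t * ∑' n, b (n + 1) * t ^ n := by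
  have hsum : Summable fun n => b n * t ^ n := by
    apply Summable.of_abs
    have : ∀ n, |b n * t ^ n| = |b n| * t ^ n := by
      intro n; rw [abs_mul, abs_of_nonneg (pow_nonneg ht.le n)]
    simpa [this] using hs
  rw [Summable.tsum_eq_zero_add hsum]
  simp only [pow_zero, mul_one]
  congr 1
  have : ∀ n : ℕ, b (n + 1) * t ^ (n + 1) = t * (b (n + 1) * t ^ n) := by
    intro n; rw [pow_succ]; ring
  rw [tsum_congr this, tsum_mul_left]

lemma shift_abs_summable (b : ℕ → ℝ) (t : ℝ) (ht : 0 < t)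
    (hs : Summable fun n => |b n| * t ^ n) :
    Summable fun n => |b (n + 1)| * t ^ n := by
  have h1 : Summable fun n => |b (n + 1)| * t ^ (n + 1) :=
    (summable_nat_add_iff 1).2 hs
  have h2 := h1.mul_right t⁻¹
  have : ∀ n : ℕ, |b (n + 1)| * t ^ (n + 1) * t⁻¹ = |b (n + 1)| * t ^ n := by
    intro n; rw [pow_succ, mul_assoc, mul_inv_cancel_right₀ ht.ne']
  simpa [this] using h2

lemma coeff_zero (b : ℕ → ℝ)
    (hs : ∀ t : ℝ, 0 < t → t < 1 → Summable fun n => |b n| * t ^ n)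
    (h0 : ∀ t : ℝ, 0 < t → t < 1 → ∑' n, b n * t ^ n = 0) : b 0 = 0 := by
  have hhalf : Summable fun n => |b n| * (1/2 : ℝ) ^ n := hs _ (by norm_num) (by norm_num)
  have hshift : Summable fun n => |b (n + 1)| * (1/2 : ℝ) ^ n :=
    shift_abs_summable b _ (by norm_num) hhalf
  set M : ℝ := ∑' n, |b (n + 1)| * (1/2 : ℝ) ^ n with hM
  have key : ∀ t : ℝ, 0 < t → t < 1/2 → |b 0| ≤ M * t := by
    intro t ht0 ht2
    have ht1 : t < 1 := by linarith
    have hst := hs t ht0 ht1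
    have hsplit := tsum_split b t ht0 hst
    rw [h0 t ht0 ht1] at hsplit
    have hb0 : b 0 = -(t * ∑' n, b (n + 1) * t ^ n) := by linarith
    have hshift_t : Summable fun n => |b (n + 1)| * t ^ n :=
      shift_abs_summable b t ht0 hst
    have habs : |∑' n, b (n + 1) * t ^ n| ≤ ∑' n, |b (n + 1)| * t ^ n := by
      have := norm_tsum_le_tsum_norm (f := fun n => b (n + 1) * t ^ n) (by
        have : ∀ n, ‖b (n + 1) * t ^ n‖ = |b (n + 1)| * t ^ n := by
          intro n
          rw [Real.norm_eq_abs, abs_mul, abs_of_nonneg (pow_nonneg ht0.le n)]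
        simpa [this] using hshift_t)
      simpa [Real.norm_eq_abs, abs_mul, abs_of_pos ht0, abs_pow] using this
    have hle : ∑' n, |b (n + 1)| * t ^ n ≤ M := by
      apply Summable.tsum_le_tsum _ hshift_t hshift
      intro n
      have := pow_le_pow_left₀ ht0.le ht2.le n
      nlinarith [abs_nonneg (b (n + 1)), pow_nonneg ht0.le n]
    rw [hb0, abs_neg, abs_mul, abs_of_pos ht0]
    calc t * |∑' n, b (n + 1) * t ^ n| ≤ t * M := by
          exact mul_le_mul_of_nonneg_left (le_trans habs hle) ht0.le
      _ = M * t := by ring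
  -- conclude b 0 = 0
  have hM0 : 0 ≤ M := tsum_nonneg fun n => by positivity
  by_contra hb
  have hb' : 0 < |b 0| := abs_pos.2 hb
  set t := min (1/4 : ℝ) (|b 0| / (2 * M + 1)) with htdef
  have ht0 : 0 < t := lt_min (by norm_num) (by positivity)
  have ht2 : t < 1/2 := lt_of_le_of_lt (min_le_left _ _) (by norm_num)
  have h1 := key t ht0 ht2
  have h2 : t ≤ |b 0| / (2 * M + 1) := min_le_right _ _
  have h3 : M * t ≤ M * (|b 0| / (2 * M + 1)) := mul_le_mul_of_nonneg_left h2 hM0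
  have h5 : (0:ℝ) < 2 * M + 1 := by linarith
  have h4 : M * (|b 0| / (2 * M + 1)) < |b 0| := by
    rw [← mul_div_assoc, div_lt_iff₀ h5]
    nlinarith
  linarith

lemma coeff_all (b : ℕ → ℝ)
    (hs : ∀ t : ℝ, 0 < t → t < 1 → Summable fun n => |b n| * t ^ n)
    (h0 : ∀ t : ℝ, 0 < t → t < 1 → ∑' n, b n * t ^ n = 0) : ∀ n, b n = 0 := by
  intro n
  induction n generalizing b with
  | zero => exact coeff_zero b hs h0
  | succ n ih =>
    have hb0 := coeff_zero b hs h0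
    have hs' : ∀ t : ℝ, 0 < t → t < 1 → Summable fun n => |b (n + 1)| * t ^ n :=
      fun t ht0 ht1 => shift_abs_summable b t ht0 (hs t ht0 ht1)
    have h0' : ∀ t : ℝ, 0 < t → t < 1 → ∑' n, b (n + 1) * t ^ n = 0 := by
      intro t ht0 ht1
      have := tsum_split b t ht0 (hs t ht0 ht1)
      rw [h0 t ht0 ht1, hb0, zero_add] at this
      exact (mul_eq_zero.1 this.symm).resolve_left ht0.ne'
    exact ih (fun k => b (k + 1)) hs' h0'

/-! ### The slice argument -/

lemma slice_coeff (a : ℕ → ℍ)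
    (hconv : ∀ ρ : ℝ, 0 ≤ ρ → ρ < 1 → Summable fun n : ℕ => ‖a n‖ * ρ ^ n)
    (h : ∀ q : ℍ, ‖q‖ < 1 → q.im ≠ 0 →
      ((∑' n : ℕ, q ^ n * a n) * (‖q.im‖⁻¹ • q.im)).re = 0)
    (I : ℍ) (hI2 : I * I = -1) (hIre : I.re = 0)
    (θ : ℝ) (hθ0 : 0 < θ) (hθπ : θ < Real.pi) :
    ∀ n : ℕ, Real.cos (n * θ) * (a n * I).re - Real.sin (n * θ) * (a n).re = 0 := by
  have hnormI : ‖I‖ = 1 := by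
    have h1 : ‖I‖ * ‖I‖ = 1 := by
      rw [← norm_mul, hI2, norm_neg, norm_one]
    nlinarith [norm_nonneg I]
  have hIne : I ≠ 0 := by
    intro h0; rw [h0] at hI2; simp at hI2
  have hsinθ : 0 < Real.sin θ := Real.sin_pos_of_pos_of_lt_pi hθ0 hθπ
  have hImI : I.im = I := by
    ext <;> simp [hIre]
  apply coeff_all
  · -- summability
    intro t ht0 ht1
    have h2 := (hconv t ht0.le ht1).mul_left 2
    apply Summable.of_nonneg_of_le (fun n => by positivity) (fun n => ?_) h2
    have hb : |Real.cos (n * θ) * (a n * I).re - Real.sin (n * θ) * (a n).re|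
        ≤ 2 * ‖a n‖ := by
      have h3 : |(a n * I).re| ≤ ‖a n‖ := by
        have := abs_re_le_norm (a n * I)
        rwa [norm_mul, hnormI, mul_one] at this
      have h4 : |(a n).re| ≤ ‖a n‖ := abs_re_le_norm (a n)
      have h5 : |Real.cos (n * θ)| ≤ 1 := Real.abs_cos_le_one _
      have h6 : |Real.sin (n * θ)| ≤ 1 := Real.abs_sin_le_one _
      calc |Real.cos (n * θ) * (a n * I).re - Real.sin (n * θ) * (a n).re|
          ≤ |Real.cos (n * θ) * (a n * I).re| + |Real.sin (n * θ) * (a n).re| :=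
            abs_sub _ _
        _ = |Real.cos (n * θ)| * |(a n * I).re| + |Real.sin (n * θ)| * |(a n).re| := by
            rw [abs_mul, abs_mul]
        _ ≤ 2 * ‖a n‖ := by
            nlinarith [mul_le_mul h5 h3 (abs_nonneg _) zero_le_one,
              mul_le_mul h6 h4 (abs_nonneg _) zero_le_one,
              abs_nonneg ((a n * I).re), abs_nonneg ((a n).re)]
    calc |Real.cos (n * θ) * (a n * I).re - Real.sin (n * θ) * (a n).re| * t ^ n
        ≤ 2 * ‖a n‖ * t ^ n := by
          exact mul_le_mul_of_nonneg_right hb (pow_nonneg ht0.le n)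
      _ = 2 * (‖a n‖ * t ^ n) := by ring
  · -- vanishing
    intro t ht0 ht1
    set q : ℍ := (t * Real.cos θ) • (1:ℍ) + (t * Real.sin θ) • I with hqdef
    have hnq : ‖q‖ = t := by
      rw [hqdef, normform I hI2 hIre]
      rw [show (t * Real.cos θ) ^ 2 + (t * Real.sin θ) ^ 2 = t ^ 2 by
        nlinarith [Real.sin_sq_add_cos_sq θ]]
      exact Real.sqrt_sq ht0.le
    have hts : 0 < t * Real.sin θ := mul_pos ht0 hsinθ
    have him : q.im = (t * Real.sin θ) • I := by
      rw [hqdef]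
      rw [Quaternion.im_add, Quaternion.im_smul, Quaternion.im_smul, hImI]
      have h1 : (1 : ℍ).im = 0 := by ext <;> simp [Quaternion.re_zero, Quaternion.imI_zero, Quaternion.imJ_zero, Quaternion.imK_zero, Quaternion.re_one, Quaternion.imI_one, Quaternion.imJ_one, Quaternion.imK_one]
      rw [h1, smul_zero, zero_add]
    have himne : q.im ≠ 0 := by
      rw [him]; exact smul_ne_zero hts.ne' hIne
    have hunit : ‖q.im‖⁻¹ • q.im = I := by
      rw [him, norm_smul, Real.norm_eq_abs, abs_of_pos hts, hnormI, mul_one,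
        smul_smul, inv_mul_cancel₀ hts.ne', one_smul]
    have H := h q (by rw [hnq]; exact ht1) himne
    rw [hunit] at H
    have hsum : Summable fun n : ℕ => q ^ n * a n := by
      apply Summable.of_norm
      have : ∀ n : ℕ, ‖q ^ n * a n‖ = ‖a n‖ * t ^ n := by
        intro n; rw [norm_mul, norm_pow, hnq, mul_comm]
      simpa [this] using hconv t ht0.le ht1
    rw [← tsum_mul_right] at H
    rw [← reCLM_apply, ContinuousLinearMap.map_tsum reCLM (hsum.mul_right I)] at H
    simp only [reCLM_apply] at H
    have hterm : ∀ n : ℕ, (q ^ n * a n * I).re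
        = (Real.cos (n * θ) * (a n * I).re - Real.sin (n * θ) * (a n).re) * t ^ n := by
      intro n
      rw [mul_assoc, hqdef, powform I hI2, re_smulone_add_smul_mul]
      have h7 : (I * (a n * I)).re = -(a n).re := by
        rw [re_mul_comm, mul_assoc, hI2, mul_neg_one, Quaternion.re_neg]
      rw [h7]
      ring
    rw [← tsum_congr hterm]
    exact H

def qI : ℍ := ⟨0, 1, 0, 0⟩
def qJ : ℍ := ⟨0, 0, 1, 0⟩
def qK : ℍ := ⟨0, 0, 0, 1⟩

lemma qI_sq : qI * qI = -1 := by ext <;> simp [Quaternion.re_mul, Quaternion.imI_mul, Quaternion.imJ_mul, Quaternion.imK_mul, Quaternion.re_one, Quaternion.imI_one, Quaternion.imJ_one, Quaternion.imK_one] <;> simp [qI]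
lemma qJ_sq : qJ * qJ = -1 := by ext <;> simp [Quaternion.re_mul, Quaternion.imI_mul, Quaternion.imJ_mul, Quaternion.imK_mul, Quaternion.re_one, Quaternion.imI_one, Quaternion.imJ_one, Quaternion.imK_one] <;> simp [qJ]
lemma qK_sq : qK * qK = -1 := by ext <;> simp [Quaternion.re_mul, Quaternion.imI_mul, Quaternion.imJ_mul, Quaternion.imK_mul, Quaternion.re_one, Quaternion.imI_one, Quaternion.imJ_one, Quaternion.imK_one] <;> simp [qK]
lemma qI_re : qI.re = 0 := rfl
lemma qJ_re : qJ.re = 0 := rfl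
lemma qK_re : qK.re = 0 := rfl

lemma mul_qI_re (w : ℍ) : (w * qI).re = -w.imI := by rw [Quaternion.re_mul]; simp [qI]
lemma mul_qJ_re (w : ℍ) : (w * qJ).re = -w.imJ := by rw [Quaternion.re_mul]; simp [qJ]
lemma mul_qK_re (w : ℍ) : (w * qK).re = -w.imK := by rw [Quaternion.re_mul]; simp [qK]

/-- If a slice regular function `g(q) = ∑ q^n a_n` on the unit ball satisfies
`Im_{I_q}(g(q)) = 0` (i.e. `Re(g(q) · I_q) = 0`) for every nonreal `q` in the ball,
then `g` is a real constant: `a₀ ∈ ℝ` and `a_n = 0` for all `n ≥ 1`. -/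
theorem im_slice_zero_implies_real_constant (a : ℕ → ℍ)
    (hconv : ∀ ρ : ℝ, 0 ≤ ρ → ρ < 1 → Summable fun n : ℕ => ‖a n‖ * ρ ^ n)
    (h : ∀ q : ℍ, ‖q‖ < 1 → q.im ≠ 0 →
      ((∑' n : ℕ, q ^ n * a n) * (‖q.im‖⁻¹ • q.im)).re = 0) :
    (a 0).im = 0 ∧ ∀ n : ℕ, 1 ≤ n → a n = 0 := by
  have pi_pos := Real.pi_pos
  have key : ∀ I : ℍ, I * I = -1 → I.re = 0 → ∀ θ : ℝ, 0 < θ → θ < Real.pi →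
      ∀ n : ℕ, Real.cos (n * θ) * (a n * I).re - Real.sin (n * θ) * (a n).re = 0 :=
    fun I hI2 hIre θ h1 h2 => slice_coeff a hconv h I hI2 hIre θ h1 h2
  -- the case n = 0, θ = π/2
  have h0 : ∀ I : ℍ, I * I = -1 → I.re = 0 → (a 0 * I).re = 0 := by
    intro I hI2 hIre
    have := key I hI2 hIre (Real.pi / 2) (by linarith) (by linarith) 0
    simpa using this
  constructor
  · have hi := h0 qI qI_sq qI_re
    have hj := h0 qJ qJ_sq qJ_re
    have hk := h0 qK qK_sq qK_re
    rw [mul_qI_re] at hi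
    rw [mul_qJ_re] at hj
    rw [mul_qK_re] at hk
    ext <;> simp [Quaternion.re_zero, Quaternion.imI_zero, Quaternion.imJ_zero, Quaternion.imK_zero] <;> linarith
  · intro n hn
    have hnR : (1:ℝ) ≤ (n:ℝ) := by exact_mod_cast hn
    have hnne : (n:ℝ) ≠ 0 := by positivity
    -- θ₁ = π / (2n) gives (a n).re = 0
    have hre : (a n).re = 0 := by
      have hθ0 : 0 < Real.pi / (2 * n) := by positivity
      have hθπ : Real.pi / (2 * n) < Real.pi := by
        apply div_lt_self pi_pos; linarith
      have := key qI qI_sq qI_re _ hθ0 hθπ n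
      have harg : (n:ℝ) * (Real.pi / (2 * n)) = Real.pi / 2 := by
        field_simp
      rw [harg, Real.cos_pi_div_two, Real.sin_pi_div_two] at this
      linarith
    -- θ₂ = π / (4n) gives (a n * I).re = 0
    have hmul : ∀ I : ℍ, I * I = -1 → I.re = 0 → (a n * I).re = 0 := by
      intro I hI2 hIre
      have hθ0 : 0 < Real.pi / (4 * n) := by positivity
      have hθπ : Real.pi / (4 * n) < Real.pi := by
        apply div_lt_self pi_pos; linarith
      have := key I hI2 hIre _ hθ0 hθπ n
      have harg : (n:ℝ) * (Real.pi / (4 * n)) = Real.pi / 4 := by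
        field_simp
      rw [harg, Real.cos_pi_div_four, hre, mul_zero, sub_zero, mul_eq_zero] at this
      rcases this with h1 | h1
      · exfalso
        have : (0:ℝ) < Real.sqrt 2 / 2 := by positivity
        linarith
      · exact h1
    have hi := hmul qI qI_sq qI_re
    have hj := hmul qJ qJ_sq qJ_re
    have hk := hmul qK qK_sq qK_re
    rw [mul_qI_re] at hi
    rw [mul_qJ_re] at hj
    rw [mul_qK_re] at hk
    ext <;> simp [Quaternion.re_zero, Quaternion.imI_zero, Quaternion.imJ_zero, Quaternion.imK_zero] <;> linarith
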